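/- Let ξ, v ∈ (0, 1/2) and define η : ℝ → ℝ by η(x) = 1 for 1-v ≤ x ≤ 1+v, η(x) = (1+v+ξ-x)/ξ for 1+v ≤ x ≤ 1+v+ξ, η(x) = (x+v+ξ-1)/ξ for 1-v-ξ ≤ x ≤ 1-v, and η(x) = 0 otherwise. Then for every complex s with Re(s) = 1 one has the two bounds |∫₀^∞ t^{s-1} η(t) dt| ≤ 2(v + ξ) and |∫₀^∞ t^{s-1} η(t) dt| ≤ C/(ξ(1+|Im s|²)) for an absolute constant C. -/

import Mathlib

open Complex MeasureTheory intervalIntegral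

lemma mellin_linear (s : ℂ) (hs0 : s ≠ 0) (hs1 : s + 1 ≠ 0)
    (hsre : -1 < (s-1).re) (p q x y : ℝ) (hx : 0 < x) (hxy : x ≤ y) :
    ∫ t in x..y, (t : ℂ) ^ (s - 1) * ((p + q * t : ℝ) : ℂ)
      = (p : ℂ) * (((y:ℂ) ^ s - (x:ℂ) ^ s) / s)
        + (q : ℂ) * (((y:ℂ) ^ s * y - (x:ℂ) ^ s * x) / (s + 1)) := by
  have hmem : ∀ t ∈ Set.uIcc x y, 0 < t := by
    intro t ht
    rw [Set.uIcc_of_le hxy] at ht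
    exact lt_of_lt_of_le hx ht.1
  have hc1 : ContinuousOn (fun t : ℝ => (t : ℂ) ^ (s - 1)) (Set.uIcc x y) := by
    intro t ht
    exact (continuousAt_ofReal_cpow_const t _ (Or.inr (ne_of_gt (hmem t ht)))).continuousWithinAt
  have hc2 : ContinuousOn (fun t : ℝ => (t : ℂ) ^ s) (Set.uIcc x y) := by
    intro t ht
    exact (continuousAt_ofReal_cpow_const t _ (Or.inr (ne_of_gt (hmem t ht)))).continuousWithinAt
  have hcongr : ∫ t in x..y, (t : ℂ) ^ (s - 1) * ((p + q * t : ℝ) : ℂ)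
      = ∫ t in x..y, ((p : ℂ) * (t : ℂ) ^ (s - 1) + (q : ℂ) * (t : ℂ) ^ s) := by
    apply intervalIntegral.integral_congr
    intro t ht
    have ht0 : (t : ℂ) ≠ 0 := by
      exact_mod_cast ne_of_gt (hmem t ht)
    have hts : (t : ℂ) ^ s = (t : ℂ) ^ (s - 1) * (t : ℂ) := by
      have h := cpow_add (x := (t:ℂ)) (s-1) 1 ht0
      simpa using h
    simp only [hts]
    push_cast
    ring
  rw [hcongr, intervalIntegral.integral_add (f := fun t : ℝ => (p : ℂ) * (t : ℂ) ^ (s - 1))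
      (g := fun t : ℝ => (q : ℂ) * (t : ℂ) ^ s)
      ((continuousOn_const.mul hc1).intervalIntegrable)
      ((continuousOn_const.mul hc2).intervalIntegrable),
    intervalIntegral.integral_const_mul, intervalIntegral.integral_const_mul,
    integral_cpow (Or.inl hsre), integral_cpow (Or.inl (by simp only [sub_re, one_re] at hsre; linarith))]
  have hx0 : (x : ℂ) ≠ 0 := by exact_mod_cast ne_of_gt hx
  have hy0 : (y : ℂ) ≠ 0 := by exact_mod_cast ne_of_gt (lt_of_lt_of_le hx hxy)
  rw [show s - 1 + 1 = s by ring, cpow_add _ _ hx0, cpow_add _ _ hy0, cpow_one, cpow_one]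

/-- The trapezoidal approximation `η_{ξ,v}` to the indicator function of `[1-v, 1+v]`
with linear ramps of width `ξ`. -/
noncomputable def etaSmooth (ξ v : ℝ) (x : ℝ) : ℝ :=
  if 1 - v ≤ x ∧ x ≤ 1 + v then 1
  else if 1 + v ≤ x ∧ x ≤ 1 + v + ξ then (1 + v + ξ - x) / ξ
  else if 1 - v - ξ ≤ x ∧ x ≤ 1 - v then (x + v + ξ - 1) / ξ
  else 0

section eta
variable {ξ v : ℝ} (hξ : 0 < ξ) (hv : 0 < v)

lemma eta_left (hξ : 0 < ξ) (hv : 0 < v) {t : ℝ} (h1 : 1 - v - ξ ≤ t) (h2 : t ≤ 1 - v) :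
    etaSmooth ξ v t = (t + v + ξ - 1) / ξ := by
  unfold etaSmooth
  split_ifs with g1 g2 <;> first
  | (exfalso; rcases g1 with ⟨g1a, g1b⟩ <;> linarith)
  | (exfalso; rcases g2 with ⟨g2a, g2b⟩ <;> linarith)
  | rfl
  | (have ht : t = 1 - v := le_antisymm h2 g1.1
     rw [ht]; field_simp; ring)
  | (exfalso; exact ‹¬(1 - v - ξ ≤ t ∧ t ≤ 1 - v)› ⟨h1, h2⟩)

lemma eta_mid {t : ℝ} (h1 : 1 - v ≤ t) (h2 : t ≤ 1 + v) :
    etaSmooth ξ v t = 1 := by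
  unfold etaSmooth
  rw [if_pos ⟨h1, h2⟩]

lemma eta_right (hξ : 0 < ξ) (hv : 0 < v) {t : ℝ} (h1 : 1 + v ≤ t) (h2 : t ≤ 1 + v + ξ) :
    etaSmooth ξ v t = (1 + v + ξ - t) / ξ := by
  unfold etaSmooth
  split_ifs with g1 g2 <;> first
  | rfl
  | (have ht : t = 1 + v := le_antisymm g1.2 h1
     rw [ht]; field_simp; ring)
  | (exfalso; exact ‹¬(1 + v ≤ t ∧ t ≤ 1 + v + ξ)› ⟨h1, h2⟩)

lemma eta_zero (hξ : 0 < ξ) (hv : 0 < v) {t : ℝ}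
    (h : t ≤ 1 - v - ξ ∨ 1 + v + ξ < t) : etaSmooth ξ v t = 0 := by
  unfold etaSmooth
  split_ifs with g1 g2 g3
  · exfalso; rcases h with h | h <;> [linarith [g1.1]; linarith [g1.2]]
  · rcases h with h | h
    · exfalso; linarith [g2.1]
    · have : t = 1 + v + ξ := le_antisymm g2.2 h.le
      exfalso; linarith
  · rcases h with h | h
    · have ht : t = 1 - v - ξ := le_antisymm h g3.1
      rw [ht]; field_simp; ring
    · exfalso; linarith [g3.2]
  · rfl

lemma eta_mem (hξ : 0 < ξ) (hv : 0 < v) (t : ℝ) :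
    0 ≤ etaSmooth ξ v t ∧ etaSmooth ξ v t ≤ 1 := by
  unfold etaSmooth
  split_ifs with g1 g2 g3
  · norm_num
  · constructor
    · apply div_nonneg _ hξ.le; linarith [g2.2]
    · rw [div_le_one hξ]; linarith [g2.1]
  · constructor
    · apply div_nonneg _ hξ.le; linarith [g3.1]
    · rw [div_le_one hξ]; linarith [g3.2]
  · norm_num

end eta

/-- For `Re s = 1`, the Mellin-type integral `∫₀^∞ t^{s-1} η_{ξ,v}(t) dt` satisfies
both `|·| ≤ 2(v+ξ)` and `|·| ≤ C/(ξ(1+|Im s|²))` for an absolute constant `C`. -/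
theorem etaSmooth_mellin_bounds :
    ∃ C > 0, ∀ ξ v : ℝ, 0 < ξ → ξ < 1 / 2 → 0 < v → v < 1 / 2 →
      ∀ s : ℂ, s.re = 1 →
        ‖∫ t in Set.Ioi (0 : ℝ), (t : ℂ) ^ (s - 1) * (etaSmooth ξ v t : ℂ)‖ ≤ 2 * (v + ξ) ∧
        ‖∫ t in Set.Ioi (0 : ℝ), (t : ℂ) ^ (s - 1) * (etaSmooth ξ v t : ℂ)‖ ≤
          C / (ξ * (1 + |s.im| ^ 2)) := by
  refine ⟨16, by norm_num, ?_⟩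
  intro ξ v hξ hξ2 hv hv2 s hs
  have hs0 : s ≠ 0 := by
    intro h; rw [h] at hs; simp at hs
  have hs1 : s + 1 ≠ 0 := by
    intro h
    have h2 : (s + 1).re = 0 := by rw [h]; simp
    rw [add_re, one_re, hs] at h2; norm_num at h2
  have hsre : -1 < (s - 1).re := by rw [sub_re, one_re, hs]; norm_num
  have ha : (0:ℝ) < 1 - v - ξ := by linarith
  have hab : (1:ℝ) - v - ξ ≤ 1 - v := by linarith
  have hbc : (1:ℝ) - v ≤ 1 + v := by linarith
  have hcd : (1:ℝ) + v ≤ 1 + v + ξ := by linarith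
  have hb : (0:ℝ) < 1 - v := by linarith
  have hc : (0:ℝ) < 1 + v := by linarith
  -- Step 1 : reduce to an interval integral
  have hred : (∫ t in Set.Ioi (0:ℝ), (t:ℂ) ^ (s-1) * (etaSmooth ξ v t : ℂ))
      = ∫ t in (1-v-ξ)..(1+v+ξ), (t:ℂ) ^ (s-1) * (etaSmooth ξ v t : ℂ) := by
    rw [intervalIntegral.integral_of_le (by linarith)]
    refine setIntegral_eq_of_subset_of_forall_diff_eq_zero measurableSet_Ioi
      (fun t ht => lt_trans ha ht.1) ?_
    intro t ht
    have h0 : etaSmooth ξ v t = 0 := by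
      apply eta_zero hξ hv
      rcases le_or_gt t (1 - v - ξ) with h | h
      · exact Or.inl h
      · right
        by_contra hcon
        push_neg at hcon
        exact ht.2 ⟨h, hcon⟩
    rw [h0]; simp
  -- continuity helpers
  have hctu : ∀ x y : ℝ, 0 < x → x ≤ y → ∀ p q : ℝ,
      ContinuousOn (fun t : ℝ => (t:ℂ) ^ (s-1) * ((p + q * t : ℝ) : ℂ)) (Set.uIcc x y) := by
    intro x y hx hxy p q
    apply ContinuousOn.mul
    · intro t ht
      rw [Set.uIcc_of_le hxy] at ht
      exact (continuousAt_ofReal_cpow_const t _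
        (Or.inr (ne_of_gt (lt_of_lt_of_le hx ht.1)))).continuousWithinAt
    · exact (Complex.continuous_ofReal.comp (by continuity)).continuousOn
  -- the three pieces
  have heq1 : Set.EqOn (fun t : ℝ => (t:ℂ) ^ (s-1) * (etaSmooth ξ v t : ℂ))
      (fun t : ℝ => (t:ℂ) ^ (s-1) * (((v+ξ-1)/ξ + (1/ξ) * t : ℝ) : ℂ))
      (Set.uIcc (1-v-ξ) (1-v)) := by
    intro t ht
    rw [Set.uIcc_of_le hab] at ht
    simp only
    rw [eta_left hξ hv ht.1 ht.2]
    congr 1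
    push_cast
    field_simp
    ring
  have heq2 : Set.EqOn (fun t : ℝ => (t:ℂ) ^ (s-1) * (etaSmooth ξ v t : ℂ))
      (fun t : ℝ => (t:ℂ) ^ (s-1) * (((1:ℝ) + (0:ℝ) * t : ℝ) : ℂ))
      (Set.uIcc (1-v) (1+v)) := by
    intro t ht
    rw [Set.uIcc_of_le hbc] at ht
    simp only
    rw [eta_mid ht.1 ht.2]
    norm_num
  have heq3 : Set.EqOn (fun t : ℝ => (t:ℂ) ^ (s-1) * (etaSmooth ξ v t : ℂ))
      (fun t : ℝ => (t:ℂ) ^ (s-1) * (((1+v+ξ)/ξ + (-(1/ξ)) * t : ℝ) : ℂ))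
      (Set.uIcc (1+v) (1+v+ξ)) := by
    intro t ht
    rw [Set.uIcc_of_le hcd] at ht
    simp only
    rw [eta_right hξ hv ht.1 ht.2]
    congr 1
    push_cast
    field_simp
    ring_nf
  -- integrability of the integrand on each piece
  have hi1 : IntervalIntegrable (fun t : ℝ => (t:ℂ) ^ (s-1) * (etaSmooth ξ v t : ℂ))
      volume (1-v-ξ) (1-v) :=
    (((hctu _ _ ha hab _ _).congr heq1)).intervalIntegrable
  have hi2 : IntervalIntegrable (fun t : ℝ => (t:ℂ) ^ (s-1) * (etaSmooth ξ v t : ℂ))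
      volume (1-v) (1+v) :=
    (((hctu _ _ hb hbc _ _).congr heq2)).intervalIntegrable
  have hi3 : IntervalIntegrable (fun t : ℝ => (t:ℂ) ^ (s-1) * (etaSmooth ξ v t : ℂ))
      volume (1+v) (1+v+ξ) :=
    (((hctu _ _ hc hcd _ _).congr heq3)).intervalIntegrable
  -- split the integral
  have hsplit : (∫ t in (1-v-ξ)..(1+v+ξ), (t:ℂ) ^ (s-1) * (etaSmooth ξ v t : ℂ))
      = (∫ t in (1-v-ξ)..(1-v), (t:ℂ) ^ (s-1) * (etaSmooth ξ v t : ℂ))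
        + (∫ t in (1-v)..(1+v), (t:ℂ) ^ (s-1) * (etaSmooth ξ v t : ℂ))
        + (∫ t in (1+v)..(1+v+ξ), (t:ℂ) ^ (s-1) * (etaSmooth ξ v t : ℂ)) := by
    rw [intervalIntegral.integral_add_adjacent_intervals hi1 hi2,
      intervalIntegral.integral_add_adjacent_intervals (hi1.trans hi2) hi3]
  -- closed form
  have key : (∫ t in Set.Ioi (0:ℝ), (t:ℂ) ^ (s-1) * (etaSmooth ξ v t : ℂ))
      = (((1+v+ξ:ℝ):ℂ) * ((1+v+ξ:ℝ):ℂ) ^ s - ((1+v:ℝ):ℂ) * ((1+v:ℝ):ℂ) ^ s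
          - ((1-v:ℝ):ℂ) * ((1-v:ℝ):ℂ) ^ s + ((1-v-ξ:ℝ):ℂ) * ((1-v-ξ:ℝ):ℂ) ^ s)
        / ((ξ:ℂ) * s * (s + 1)) := by
    rw [hred, hsplit, intervalIntegral.integral_congr heq1,
      intervalIntegral.integral_congr heq2, intervalIntegral.integral_congr heq3,
      mellin_linear s hs0 hs1 hsre _ _ _ _ ha hab,
      mellin_linear s hs0 hs1 hsre _ _ _ _ hb hbc,
      mellin_linear s hs0 hs1 hsre _ _ _ _ hc hcd]
    have hξ0 : (ξ:ℂ) ≠ 0 := by exact_mod_cast ne_of_gt hξ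
    generalize ((1-v-ξ:ℝ):ℂ) ^ s = A
    generalize ((1-v:ℝ):ℂ) ^ s = B
    generalize ((1+v:ℝ):ℂ) ^ s = C
    generalize ((1+v+ξ:ℝ):ℂ) ^ s = D
    have hcomb : ∀ p q X Y x y : ℂ, p * ((Y - X) / s) + q * ((Y * y - X * x) / (s + 1))
        = (p * (Y - X) * (s + 1) + q * (Y * y - X * x) * s) / (s * (s + 1)) := by
      intro p q X Y x y
      field_simp
    rw [hcomb, hcomb, hcomb, ← add_div, ← add_div,
      div_eq_div_iff (mul_ne_zero hs0 hs1) (mul_ne_zero (mul_ne_zero hξ0 hs0) hs1)]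
    push_cast
    field_simp
    ring
  -- norm facts
  have hnorm : ∀ x : ℝ, 0 < x → x ≤ 2 → ‖(x:ℂ) * (x:ℂ) ^ s‖ ≤ 4 := by
    intro x hx hx2
    rw [norm_mul, Complex.norm_real, Real.norm_eq_abs,
      norm_cpow_eq_rpow_re_of_pos hx, hs, Real.rpow_one, abs_of_pos hx]
    nlinarith
  have hnum : ‖((1+v+ξ:ℝ):ℂ) * ((1+v+ξ:ℝ):ℂ) ^ s - ((1+v:ℝ):ℂ) * ((1+v:ℝ):ℂ) ^ s
      - ((1-v:ℝ):ℂ) * ((1-v:ℝ):ℂ) ^ s + ((1-v-ξ:ℝ):ℂ) * ((1-v-ξ:ℝ):ℂ) ^ s‖ ≤ 16 := by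
    have h1 := hnorm _ (by linarith : (0:ℝ) < 1+v+ξ) (by linarith)
    have h2 := hnorm _ hc (by linarith)
    have h3 := hnorm _ hb (by linarith)
    have h4 := hnorm _ ha (by linarith)
    calc ‖_ - _ - _ + _‖ ≤ ‖_ - _ - _‖ + ‖_‖ := norm_add_le _ _
      _ ≤ ‖_ - _‖ + ‖_‖ + ‖_‖ := by gcongr; exact norm_sub_le _ _
      _ ≤ ‖_‖ + ‖_‖ + ‖_‖ + ‖_‖ := by gcongr; exact norm_sub_le _ _
      _ ≤ 16 := by linarith
  have hden : ξ * (1 + |s.im| ^ 2) ≤ ‖(ξ:ℂ) * s * (s + 1)‖ := by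
    rw [norm_mul, norm_mul, Complex.norm_real, Real.norm_eq_abs, abs_of_pos hξ]
    have h1 : ‖s‖ ^ 2 = 1 + s.im ^ 2 := by
      rw [Complex.sq_norm, Complex.normSq_apply, hs]; ring
    have h2 : ‖s + 1‖ ^ 2 = 4 + s.im ^ 2 := by
      rw [Complex.sq_norm, Complex.normSq_apply, add_re, add_im, one_re,
        one_im, hs]
      ring
    have hu := norm_nonneg s
    have hw := norm_nonneg (s + 1)
    have him := sq_nonneg s.im
    have h3 : (‖s‖ * ‖s + 1‖) ^ 2 = (1 + s.im ^ 2) * (4 + s.im ^ 2) := by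
      rw [mul_pow, h1, h2]
    have h4 : 1 + s.im ^ 2 ≤ ‖s‖ * ‖s + 1‖ := by
      nlinarith [mul_nonneg hu hw]
    calc ξ * (1 + |s.im| ^ 2) = ξ * (1 + s.im ^ 2) := by rw [_root_.sq_abs]
      _ ≤ ξ * (‖s‖ * ‖s + 1‖) := mul_le_mul_of_nonneg_left h4 hξ.le
      _ = ξ * ‖s‖ * ‖s + 1‖ := by ring
  rw [key]
  have hpos : (0:ℝ) < ξ * (1 + |s.im| ^ 2) := by positivity
  have hbound2 : ‖(((1+v+ξ:ℝ):ℂ) * ((1+v+ξ:ℝ):ℂ) ^ s - ((1+v:ℝ):ℂ) * ((1+v:ℝ):ℂ) ^ s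
      - ((1-v:ℝ):ℂ) * ((1-v:ℝ):ℂ) ^ s + ((1-v-ξ:ℝ):ℂ) * ((1-v-ξ:ℝ):ℂ) ^ s)
        / ((ξ:ℂ) * s * (s + 1))‖ ≤ 16 / (ξ * (1 + |s.im| ^ 2)) := by
    rw [norm_div]
    exact div_le_div₀ (by norm_num) hnum hpos hden
  refine ⟨?_, hbound2⟩
  -- first bound
  rw [← key, hred]
  have hpt : ∀ t ∈ Set.uIoc (1-v-ξ) (1+v+ξ), ‖(t:ℂ) ^ (s-1) * (etaSmooth ξ v t : ℂ)‖ ≤ 1 := by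
    intro t ht
    rw [Set.uIoc_of_le (by linarith)] at ht
    have ht0 : (0:ℝ) < t := lt_trans ha ht.1
    rw [norm_mul, norm_cpow_eq_rpow_re_of_pos ht0, sub_re, one_re, hs,
      sub_self, Real.rpow_zero, one_mul, Complex.norm_real, Real.norm_eq_abs]
    obtain ⟨he1, he2⟩ := eta_mem hξ hv (ξ := ξ) (v := v) t
    rw [_root_.abs_of_nonneg he1]
    exact he2
  calc ‖∫ t in (1-v-ξ)..(1+v+ξ), (t:ℂ) ^ (s-1) * (etaSmooth ξ v t : ℂ)‖
      ≤ 1 * |(1+v+ξ) - (1-v-ξ)| := intervalIntegral.norm_integral_le_of_norm_le_const hpt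
    _ = 2 * (v + ξ) := by rw [one_mul, _root_.abs_of_nonneg (by linarith : (0:ℝ) ≤ 1+v+ξ-(1-v-ξ))]; ring
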